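/- arXiv:2112.00126 — 3 statements merged into one kernel-verified Lean document; each statement's English description precedes it below -/
import Mathlib

section
/- Let Y be a measurable space, κ a Markov kernel on Y, μ0 a probability measure on Y, V : Y → [1, ∞) measurable with ∫ V dμ0 < ∞, f : Y → ℝ measurable, ℓ ∈ ℝ, and constants K ≥ 0 and ρ ∈ (0,1) such that |(κ^n f)(y) − ℓ| ≤ K ρ^n V(y) for all n ≥ 0 and all y ∈ Y. Then for every integer N ≥ 1, | (1/N) Σ_{n=0}^{N−1} ∫ (κ^n f) dμ0 − ℓ | ≤ (K/N) (∫ V dμ0) (1 − ρ^N)/(1 − ρ) ≤ (K/N) (∫ V dμ0) / (1 − ρ). -/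
open MeasureTheory ProbabilityTheory

/-- Finite-integration-time bias bound for ergodic averages: if the Markov kernel `κ`
(acting on functions by `(P φ)(y) = ∫ φ dκ(y,·)`, so that `κ^n f = P^[n] f`) satisfies
the geometric ergodicity bound `|(κ^n f)(y) − ℓ| ≤ K ρ^n V(y)` with Lyapunov weight
`V ≥ 1`, `∫ V dμ0 < ∞`, then for every `N ≥ 1`,
`|(1/N) Σ_{n<N} ∫ κ^n f dμ0 − ℓ| ≤ (K/N)(∫ V dμ0)(1 − ρ^N)/(1 − ρ) ≤ (K/N)(∫ V dμ0)/(1 − ρ)`. -/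
theorem stmt8 {Y : Type*} [MeasurableSpace Y] (κ : Kernel Y Y) [IsMarkovKernel κ]
    (μ0 : Measure Y) [IsProbabilityMeasure μ0]
    (V : Y → ℝ) (hVmeas : Measurable V) (hV1 : ∀ y, 1 ≤ V y)
    (hVint : Integrable V μ0)
    (f : Y → ℝ) (hf : Measurable f) (ℓ K ρ : ℝ) (hK : 0 ≤ K)
    (hρ : ρ ∈ Set.Ioo (0 : ℝ) 1)
    (P : (Y → ℝ) → Y → ℝ) (hP : ∀ (φ : Y → ℝ) (y : Y), P φ y = ∫ x, φ x ∂(κ y))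
    (hmeas : ∀ n : ℕ, AEStronglyMeasurable (P^[n] f) μ0)
    (hbound : ∀ (n : ℕ) (y : Y), |(P^[n] f) y - ℓ| ≤ K * ρ ^ n * V y) :
    ∀ N : ℕ, 1 ≤ N →
      (|(1 / N : ℝ) * ∑ n ∈ Finset.range N, ∫ y, (P^[n] f) y ∂μ0 - ℓ|
          ≤ K / N * (∫ y, V y ∂μ0) * (1 - ρ ^ N) / (1 - ρ))
      ∧ (K / N * (∫ y, V y ∂μ0) * (1 - ρ ^ N) / (1 - ρ)
          ≤ K / N * (∫ y, V y ∂μ0) / (1 - ρ)) := by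

  intro N hN
  obtain ⟨hρ0, hρ1⟩ := hρ
  have hNpos : (0:ℝ) < N := by exact_mod_cast hN
  have hVpos : 0 < ∫ y, V y ∂μ0 := by
    have : (1:ℝ) ≤ ∫ y, V y ∂μ0 := by
      calc (1:ℝ) = ∫ _, (1:ℝ) ∂μ0 := by simp
      _ ≤ ∫ y, V y ∂μ0 := integral_mono (integrable_const 1) hVint hV1
    linarith
  -- integrability of each P^[n] f
  have hint : ∀ n : ℕ, Integrable (P^[n] f) μ0 := by
    intro n
    have : Integrable (fun y => |ℓ| + K * ρ ^ n * V y) μ0 :=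
      (integrable_const _).add ((hVint.const_mul _))
    refine this.mono' (hmeas n) (Filter.Eventually.of_forall fun y => ?_)
    have h := hbound n y
    have : |(P^[n] f) y| ≤ |ℓ| + |(P^[n] f) y - ℓ| := by
      have := abs_sub_abs_le_abs_sub ((P^[n] f) y) ℓ
      nlinarith [abs_abs ((P^[n] f) y), abs_sub_comm ((P^[n] f) y) ℓ]
    simp only [Real.norm_eq_abs]
    linarith
  -- per-term bound
  have hterm : ∀ n : ℕ, |(∫ y, (P^[n] f) y ∂μ0) - ℓ| ≤ K * ρ ^ n * ∫ y, V y ∂μ0 := by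
    intro n
    have h1 : (∫ y, (P^[n] f) y ∂μ0) - ℓ = ∫ y, ((P^[n] f) y - ℓ) ∂μ0 := by
      rw [integral_sub (hint n) (integrable_const ℓ)]; simp
    rw [h1]
    calc |∫ y, ((P^[n] f) y - ℓ) ∂μ0| ≤ ∫ y, |(P^[n] f) y - ℓ| ∂μ0 := by
          simpa [Real.norm_eq_abs] using
            norm_integral_le_integral_norm (fun y => (P^[n] f) y - ℓ) (μ := μ0)
      _ ≤ ∫ y, K * ρ ^ n * V y ∂μ0 := by
          refine integral_mono ((hint n).sub (integrable_const ℓ)).abs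
            (hVint.const_mul _) fun y => hbound n y
      _ = K * ρ ^ n * ∫ y, V y ∂μ0 := integral_const_mul _ _
  constructor
  · have hsum : |∑ n ∈ Finset.range N, ((∫ y, (P^[n] f) y ∂μ0) - ℓ)|
        ≤ K * (∫ y, V y ∂μ0) * ((1 - ρ ^ N) / (1 - ρ)) := by
      calc |∑ n ∈ Finset.range N, ((∫ y, (P^[n] f) y ∂μ0) - ℓ)|
          ≤ ∑ n ∈ Finset.range N, |(∫ y, (P^[n] f) y ∂μ0) - ℓ| :=
            Finset.abs_sum_le_sum_abs _ _
        _ ≤ ∑ n ∈ Finset.range N, K * ρ ^ n * ∫ y, V y ∂μ0 :=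
            Finset.sum_le_sum fun n _ => hterm n
        _ = K * (∫ y, V y ∂μ0) * ∑ n ∈ Finset.range N, ρ ^ n := by
            rw [Finset.mul_sum]; congr 1; ext n; ring
        _ = K * (∫ y, V y ∂μ0) * ((1 - ρ ^ N) / (1 - ρ)) := by
            rw [geom_sum_eq (by linarith)]
            congr 1
            rw [div_eq_div_iff (by linarith) (by linarith)]
            ring
    have hrw : (1 / N : ℝ) * ∑ n ∈ Finset.range N, ∫ y, (P^[n] f) y ∂μ0 - ℓ
        = (1 / N : ℝ) * ∑ n ∈ Finset.range N, ((∫ y, (P^[n] f) y ∂μ0) - ℓ) := by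
      rw [Finset.sum_sub_distrib]
      simp [Finset.card_range]
      field_simp
    rw [hrw, abs_mul, abs_of_nonneg (by positivity : (0:ℝ) ≤ (1/N:ℝ))]
    calc (1 / N : ℝ) * |∑ n ∈ Finset.range N, ((∫ y, (P^[n] f) y ∂μ0) - ℓ)|
        ≤ (1 / N : ℝ) * (K * (∫ y, V y ∂μ0) * ((1 - ρ ^ N) / (1 - ρ))) := by
          exact mul_le_mul_of_nonneg_left hsum (by positivity)
      _ = K / N * (∫ y, V y ∂μ0) * (1 - ρ ^ N) / (1 - ρ) := by ring
  · have h1 : (0:ℝ) ≤ K / N * (∫ y, V y ∂μ0) := by positivity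
    have h2 : 1 - ρ ^ N ≤ 1 := by linarith [pow_pos hρ0 N]
    rw [div_le_div_iff_of_pos_right (by linarith)]
    calc K / N * (∫ y, V y ∂μ0) * (1 - ρ ^ N) ≤ K / N * (∫ y, V y ∂μ0) * 1 :=
          mul_le_mul_of_nonneg_left h2 h1
      _ = K / N * (∫ y, V y ∂μ0) := by ring
end

section
/- Let Y be a measurable space, κ a Markov kernel on Y, f : Y → ℝ measurable, ℓ ∈ ℝ, h > 0, V : Y → [1, ∞) measurable with (κ V)(y) < ∞ for every y, and constants A ≥ 0, ρ ∈ (0,1) such that |(κ^n f)(y) − ℓ| ≤ A ρ^n V(y) for all n ≥ 0 and all y ∈ Y. Then the series f̂(y) := h Σ_{n=0}^∞ ( (κ^n f)(y) − ℓ ) converges absolutely for every y, satisfies |f̂(y)| ≤ (A h / (1 − ρ)) V(y), and solves the discrete Poisson equation f̂(y) − (κ f̂)(y) = h ( f(y) − ℓ ) for every y ∈ Y. -/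
open MeasureTheory ProbabilityTheory

/-- Construction of the solution of the discrete Poisson equation from geometric ergodicity:
if `|(κ^n f)(y) − ℓ| ≤ A ρ^n V(y)` (with `κ^n f = P^[n] f` for the action
`(P φ)(y) = ∫ φ dκ(y,·)`), then the series `f̂(y) = h Σ_{n≥0} ((κ^n f)(y) − ℓ)` converges
absolutely, satisfies `|f̂(y)| ≤ (A h/(1 − ρ)) V(y)`, and solves
`f̂(y) − (κ f̂)(y) = h (f(y) − ℓ)` for every `y`. -/
theorem stmt14 {Y : Type*} [MeasurableSpace Y] (κ : Kernel Y Y) [IsMarkovKernel κ]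
    (f : Y → ℝ) (hf : Measurable f) (ℓ h : ℝ) (hh : 0 < h)
    (V : Y → ℝ) (hVmeas : Measurable V) (hV1 : ∀ x, 1 ≤ V x)
    (hVκ : ∀ y, Integrable V (κ y))
    (A ρ : ℝ) (hA : 0 ≤ A) (hρ : ρ ∈ Set.Ioo (0 : ℝ) 1)
    (P : (Y → ℝ) → Y → ℝ) (hP : ∀ (φ : Y → ℝ) (y : Y), P φ y = ∫ x, φ x ∂(κ y))
    (hbound : ∀ (n : ℕ) (y : Y), |(P^[n] f) y - ℓ| ≤ A * ρ ^ n * V y) :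
    ∀ y : Y,
      Summable (fun n : ℕ => |(P^[n] f) y - ℓ|)
      ∧ |h * ∑' n : ℕ, ((P^[n] f) y - ℓ)| ≤ A * h / (1 - ρ) * V y
      ∧ (h * ∑' n : ℕ, ((P^[n] f) y - ℓ))
            - ∫ x, (h * ∑' n : ℕ, ((P^[n] f) x - ℓ)) ∂(κ y)
          = h * (f y - ℓ) := by
  obtain ⟨hρ0, hρ1⟩ := hρ
  have hρnn : (0 : ℝ) ≤ ρ := le_of_lt hρ0
  set g : ℕ → Y → ℝ := fun n y => (P^[n] f) y - ℓ with hg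
  -- measurability of iterates
  have hmeas : ∀ n, Measurable (P^[n] f) := by
    intro n
    induction n with
    | zero => simpa using hf
    | succ n ih =>
      rw [Function.iterate_succ_apply']
      have : (P (P^[n] f)) = fun y => ∫ x, (P^[n] f) x ∂(κ y) := by
        funext y; exact hP _ y
      rw [this]
      have hsm : StronglyMeasurable fun p : Y × Y => (P^[n] f) p.2 :=
        (ih.comp measurable_snd).stronglyMeasurable
      exact (StronglyMeasurable.integral_kernel_prod_right
        (f := fun _ x => (P^[n] f) x) hsm).measurable
  -- geometric summability with parameter y
  have hsum : ∀ y, Summable (fun n : ℕ => |g n y|) := by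
    intro y
    refine Summable.of_nonneg_of_le (fun n => abs_nonneg _) (fun n => hbound n y) ?_
    have : Summable (fun n : ℕ => ρ ^ n) := summable_geometric_of_lt_one hρnn hρ1
    simpa [mul_comm, mul_assoc] using (this.mul_left A).mul_right (V y)
  have hVpos : ∀ x, (0 : ℝ) ≤ V x := fun x => le_trans zero_le_one (hV1 x)
  -- bound on the tsum
  have htsum_bound : ∀ y, |∑' n : ℕ, g n y| ≤ A / (1 - ρ) * V y := by
    intro y
    calc |∑' n : ℕ, g n y| ≤ ∑' n : ℕ, |g n y| := by
          have := norm_tsum_le_tsum_norm (f := fun n : ℕ => g n y)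
            (by simpa [Real.norm_eq_abs] using hsum y)
          simpa [Real.norm_eq_abs] using this
      _ ≤ ∑' n : ℕ, A * ρ ^ n * V y := by
          refine Summable.tsum_le_tsum (fun n => hbound n y) (hsum y) ?_
          have : Summable (fun n : ℕ => ρ ^ n) := summable_geometric_of_lt_one hρnn hρ1
          simpa [mul_comm, mul_assoc] using (this.mul_left A).mul_right (V y)
      _ = A / (1 - ρ) * V y := by
          rw [tsum_mul_right]
          have : ∑' n : ℕ, A * ρ ^ n = A * (1 - ρ)⁻¹ := by
            rw [tsum_mul_left, tsum_geometric_of_lt_one hρnn hρ1]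
          rw [this]; ring
  -- integrability of g n against κ y
  have hint : ∀ n y, Integrable (g n) (κ y) := by
    intro n y
    refine Integrable.mono ((hVκ y).const_mul (A * ρ ^ n)) ?_ ?_
    · exact ((hmeas n).sub measurable_const).aestronglyMeasurable
    · refine Filter.Eventually.of_forall (fun x => ?_)
      rw [Real.norm_eq_abs, Real.norm_eq_abs,
        abs_of_nonneg (mul_nonneg (mul_nonneg hA (pow_nonneg hρnn n)) (hVpos x))]
      exact hbound n x
  intro y
  refine ⟨hsum y, ?_, ?_⟩
  · rw [abs_mul, abs_of_pos hh]
    calc h * |∑' n : ℕ, g n y| ≤ h * (A / (1 - ρ) * V y) := by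
          exact mul_le_mul_of_nonneg_left (htsum_bound y) hh.le
      _ = A * h / (1 - ρ) * V y := by ring
  · -- Poisson equation
    have key : ∫ x, (∑' n : ℕ, g n x) ∂(κ y) = ∑' n : ℕ, g (n + 1) y := by
      rw [← integral_tsum_of_summable_integral_norm (fun n => hint n y) ?_]
      · congr 1
        funext n
        have h1 : ∫ x, g n x ∂(κ y) = (∫ x, (P^[n] f) x ∂(κ y)) - ℓ := by
          have hi : Integrable (P^[n] f) (κ y) := by
            have h2 := (hint n y).add (integrable_const ℓ)
            have he : (g n + fun _ => ℓ) = P^[n] f := by funext x; simp [g]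
            rwa [he] at h2
          rw [show g n = fun x => (P^[n] f) x - ℓ from rfl,
            integral_sub hi (integrable_const ℓ), integral_const]
          simp
        rw [h1]
        have : (P^[n+1] f) y = ∫ x, (P^[n] f) x ∂(κ y) := by
          rw [Function.iterate_succ_apply', hP]
        simp [g, this]
      · have hb : ∀ n : ℕ, ∫ x, ‖g n x‖ ∂(κ y) ≤ A * ρ ^ n * ∫ x, V x ∂(κ y) := by
          intro n
          rw [← integral_const_mul]
          refine integral_mono (hint n y).norm ((hVκ y).const_mul _) (fun x => ?_)
          rw [Real.norm_eq_abs]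
          exact hbound n x
        refine Summable.of_nonneg_of_le
          (fun n => integral_nonneg fun x => norm_nonneg _) hb ?_
        have : Summable (fun n : ℕ => ρ ^ n) := summable_geometric_of_lt_one hρnn hρ1
        simpa [mul_comm, mul_assoc] using (this.mul_left A).mul_right (∫ x, V x ∂(κ y))
    have hsummy : Summable (fun n : ℕ => g n y) := (hsum y).of_abs
    have hsplit : ∑' n : ℕ, g n y = g 0 y + ∑' n : ℕ, g (n + 1) y :=
      Summable.tsum_eq_zero_add hsummy
    have hint_eq : ∀ x : Y, h * ∑' n : ℕ, ((P^[n] f) x - ℓ) = h * ∑' n : ℕ, g n x :=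
      fun x => rfl
    calc (h * ∑' n : ℕ, ((P^[n] f) y - ℓ))
            - ∫ x, (h * ∑' n : ℕ, ((P^[n] f) x - ℓ)) ∂(κ y)
        = h * ∑' n : ℕ, g n y - h * ∫ x, (∑' n : ℕ, g n x) ∂(κ y) := by
          rw [integral_const_mul]
      _ = h * (∑' n : ℕ, g n y - ∑' n : ℕ, g (n + 1) y) := by rw [key]; ring
      _ = h * g 0 y := by rw [hsplit]; ring
      _ = h * (f y - ℓ) := by simp [g]
end

section
/- Let (Ω, F, (F_n)_{n∈ℕ}, P) be a filtered probability space, Y a measurable space, κ a Markov kernel on Y, h > 0, and (y^n)_{n≥0} an adapted Y-valued process. Let f : Y → ℝ be measurable, c ∈ ℝ, and f̂ : Y → ℝ measurable with (κ|f̂|)(x) < ∞ for all x and f̂ − κ f̂ = h (f − c) pointwise. Assume E[f̂(y^{n+1}) | F_n] = (κ f̂)(y^n) a.s. for all n, that f̂(y^n) and (κ f̂)(y^n) are square-integrable for all n, and that (z^n)_{n≥0} is a square-integrable (F_n)-martingale with z^0 = 0. Then for every N ≥ 1, E[ ( (1/N) Σ_{n=0}^{N−1} ( f(y^n) − c ) )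 z^N ] = (1/(N h)) Σ_{n=0}^{N−1} E[ ( f̂(y^{n+1}) − (κ f̂)(y^n) ) ( z^{n+1} − z^n ) ] + (1/(N h)) E[ ( f̂(y^0) − f̂(y^N) ) z^N ]. -/
open MeasureTheory ProbabilityTheory

private lemma aux_mul_int {Ω : Type*} {m0 : MeasurableSpace Ω} {μ : Measure Ω}
    {a b : Ω → ℝ} (ha : MemLp a 2 μ) (hb : MemLp b 2 μ) :
    Integrable (fun ω => a ω * b ω) μ := by
  have := (hb.smul (φ := a) (p := 2) (q := 2) (r := 1) ha)
  rw [memLp_one_iff_integrable] at this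
  exact this

private lemma aux_orth {Ω : Type*} {m0 : MeasurableSpace Ω} (μ : Measure Ω)
    [IsProbabilityMeasure μ] {m : MeasurableSpace Ω} (hm : m ≤ m0)
    {g X : Ω → ℝ} (hg : StronglyMeasurable[m] g) (hgL2 : MemLp g 2 μ)
    (hXL2 : MemLp X 2 μ) (hX : μ[X|m] =ᵐ[μ] 0) :
    ∫ ω, g ω * X ω ∂μ = 0 := by
  have hint : Integrable (fun ω => g ω * X ω) μ := aux_mul_int hgL2 hXL2
  have hpull : μ[g * X|m] =ᵐ[μ] g * μ[X|m] :=
    condExp_mul_of_stronglyMeasurable_left hg hint (hXL2.integrable one_le_two)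
  have h1 : ∫ ω, (μ[g * X|m]) ω ∂μ = ∫ ω, (g * X) ω ∂μ :=
    integral_condExp (f := g * X) hm
  have h2 : (μ[g * X|m]) =ᵐ[μ] 0 := by
    refine hpull.trans ?_
    filter_upwards [hX] with ω hω
    simp [hω]
  have h3 : ∫ ω, (g * X) ω ∂μ = 0 := by
    rw [← h1, integral_congr_ae h2]
    simp
  exact h3

/-- Key decomposition underlying the bias and variance analysis of martingale product
estimators: if `f̂` solves the discrete Poisson equation `f̂ − κ f̂ = h (f − c)`, the chain
satisfies the one-step Markov property for `f̂`, `f̂(y^n)` and `(κ f̂)(y^n)` are square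
integrable, and `z` is a square-integrable martingale with `z^0 = 0`, then for every
`N ≥ 1`, `E[((1/N) Σ_{n<N} (f(y^n) − c)) z^N]
  = (1/(Nh)) Σ_{n<N} E[(f̂(y^{n+1}) − (κ f̂)(y^n))(z^{n+1} − z^n)]
    + (1/(Nh)) E[(f̂(y^0) − f̂(y^N)) z^N]`. -/
theorem stmt15 {Ω Y : Type*} {m0 : MeasurableSpace Ω} [MeasurableSpace Y]
    (μ : Measure Ω) [IsProbabilityMeasure μ] (ℱ : Filtration ℕ m0)
    (κ : Kernel Y Y) [IsMarkovKernel κ] (h : ℝ) (hh : 0 < h)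
    (y : ℕ → Ω → Y) (hy : ∀ n, @Measurable Ω Y (ℱ n) _ (y n))
    (f : Y → ℝ) (hf : Measurable f) (c : ℝ)
    (fhat : Y → ℝ) (hfhat : Measurable fhat)
    (hfhatint : ∀ x, Integrable fhat (κ x))
    (hPoisson : ∀ x, fhat x - ∫ z, fhat z ∂(κ x) = h * (f x - c))
    (hcond : ∀ n, μ[fun ω => fhat (y (n + 1) ω) | ℱ n]
        =ᵐ[μ] fun ω => ∫ z, fhat z ∂(κ (y n ω)))
    (hL2a : ∀ n, MemLp (fun ω => fhat (y n ω)) 2 μ)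
    (hL2b : ∀ n, MemLp (fun ω => ∫ z, fhat z ∂(κ (y n ω))) 2 μ)
    (z : ℕ → Ω → ℝ) (hz : Martingale z ℱ μ) (hz0 : ∀ ω, z 0 ω = 0)
    (hzL2 : ∀ n, MemLp (z n) 2 μ) :
    ∀ N : ℕ, 1 ≤ N →
      ∫ ω, ((1 / N : ℝ) * ∑ n ∈ Finset.range N, (f (y n ω) - c)) * z N ω ∂μ
        = 1 / (N * h) * ∑ n ∈ Finset.range N,
            ∫ ω, (fhat (y (n + 1) ω) - ∫ x, fhat x ∂(κ (y n ω)))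
                * (z (n + 1) ω - z n ω) ∂μ
          + 1 / (N * h) * ∫ ω, (fhat (y 0 ω) - fhat (y N ω)) * z N ω ∂μ := by
  intro N hN
  -- notation
  set F : ℕ → Ω → ℝ := fun n ω => fhat (y n ω) with hF
  set g : ℕ → Ω → ℝ := fun n ω => ∫ x, fhat x ∂(κ (y n ω)) with hg
  set ΔM : ℕ → Ω → ℝ := fun n ω => F (n + 1) ω - g n ω with hΔM
  -- measurability facts
  have hKm : StronglyMeasurable fun x : Y => ∫ v, fhat v ∂(κ x) :=
    StronglyMeasurable.integral_kernel_prod_right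
      (f := fun (_ : Y) (v : Y) => fhat v)
      (hfhat.stronglyMeasurable.comp_measurable measurable_snd)
  have hFmeas : ∀ n, StronglyMeasurable[ℱ n] (F n) := fun n =>
    hfhat.stronglyMeasurable.comp_measurable (hy n)
  have hgmeas : ∀ n, StronglyMeasurable[ℱ n] (g n) := fun n =>
    hKm.comp_measurable (hy n)
  have hΔL2 : ∀ n, MemLp (ΔM n) 2 μ := fun n => (hL2a (n + 1)).sub (hL2b n)
  have hzsub : ∀ M : ℕ, MemLp (fun ω => z (M + 1) ω - z M ω) 2 μ := fun M =>
    (hzL2 (M + 1)).sub (hzL2 M)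
  have hΔmeas : ∀ n, StronglyMeasurable[ℱ (n + 1)] (ΔM n) := fun n =>
    (hFmeas (n + 1)).sub ((hgmeas n).mono (ℱ.mono (Nat.le_succ n)))
  -- conditional expectation of martingale increments is zero
  have hzinc : ∀ M : ℕ, μ[(fun ω => z (M + 1) ω - z M ω)|ℱ M] =ᵐ[μ] 0 := by
    intro M
    have h1 : μ[(fun ω => z (M + 1) ω - z M ω)|ℱ M]
        =ᵐ[μ] μ[z (M + 1)|ℱ M] - μ[z M|ℱ M] :=
      condExp_sub (hz.integrable (M + 1)) (hz.integrable M) _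
    refine h1.trans ?_
    filter_upwards [hz.condExp_ae_eq (Nat.le_succ M),
      hz.condExp_ae_eq (le_refl M)] with ω h1 h2
    simp [Pi.sub_apply, h1, h2]
  -- conditional expectation of ΔM n given ℱ n is zero
  have hΔcond : ∀ n, μ[ΔM n|ℱ n] =ᵐ[μ] 0 := by
    intro n
    have h1 : μ[ΔM n|ℱ n] =ᵐ[μ] μ[F (n + 1)|ℱ n] - μ[g n|ℱ n] :=
      condExp_sub ((hL2a (n + 1)).integrable one_le_two)
        ((hL2b n).integrable one_le_two) _
    have h2 : μ[g n|ℱ n] = g n :=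
      condExp_of_stronglyMeasurable (ℱ.le n) (hgmeas n)
        ((hL2b n).integrable one_le_two)
    refine h1.trans ?_
    filter_upwards [hcond n] with ω hω
    simp only [Pi.sub_apply, h2]
    rw [hω]
    simp [F, g]
  -- key orthogonality: ∫ ΔM n * z M is constant for M ≥ n + 1
  have key0 : ∀ n, ∫ ω, ΔM n ω * z n ω ∂μ = 0 := by
    intro n
    have := aux_orth μ (ℱ.le n) (hz.stronglyMeasurable n) (hzL2 n) (hΔL2 n)
      (hΔcond n)
    calc ∫ ω, ΔM n ω * z n ω ∂μ = ∫ ω, z n ω * ΔM n ω ∂μ := by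
          simp_rw [mul_comm]
      _ = 0 := this
  have key : ∀ n, n + 1 ≤ N →
      ∫ ω, ΔM n ω * z N ω ∂μ = ∫ ω, ΔM n ω * (z (n + 1) ω - z n ω) ∂μ := by
    intro n hn
    have hconst : ∀ M, n + 1 ≤ M →
        ∫ ω, ΔM n ω * z M ω ∂μ = ∫ ω, ΔM n ω * z (n + 1) ω ∂μ := by
      intro M hM
      induction M with
      | zero => omega
      | succ M ih =>
        rcases Nat.lt_or_ge n M with hlt | hge
        · have hM' : n + 1 ≤ M := hlt
          have horth : ∫ ω, ΔM n ω * (z (M + 1) ω - z M ω) ∂μ = 0 :=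
            aux_orth μ (ℱ.le M) ((hΔmeas n).mono (ℱ.mono hM')) (hΔL2 n)
              (hzsub M) (hzinc M)
          have hsplit : ∫ ω, ΔM n ω * z (M + 1) ω ∂μ
              = ∫ ω, ΔM n ω * z M ω ∂μ
                + ∫ ω, ΔM n ω * (z (M + 1) ω - z M ω) ∂μ := by
            rw [← integral_add (aux_mul_int (hΔL2 n) (hzL2 M))
              (aux_mul_int (hΔL2 n) (hzsub M))]
            congr 1; ext ω; ring
          rw [hsplit, horth, add_zero, ih hM']
        · have : M = n := by omega
          subst this
          rfl
    have h1 := hconst N hn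
    have h2 : ∫ ω, ΔM n ω * z (n + 1) ω ∂μ
        = ∫ ω, ΔM n ω * (z (n + 1) ω - z n ω) ∂μ
          + ∫ ω, ΔM n ω * z n ω ∂μ := by
      rw [← integral_add (aux_mul_int (hΔL2 n) (hzsub n))
        (aux_mul_int (hΔL2 n) (hzL2 n))]
      congr 1; ext ω; ring
    rw [h1, h2, key0 n, add_zero]
  -- pointwise algebraic identity
  have hNne : (N : ℝ) ≠ 0 := Nat.cast_ne_zero.mpr (by omega)
  have hhne : h ≠ 0 := ne_of_gt hh
  have hpt : ∀ ω, ((1 / N : ℝ) * ∑ n ∈ Finset.range N, (f (y n ω) - c)) * z N ω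
      = 1 / (N * h) * ((∑ n ∈ Finset.range N, ΔM n ω) * z N ω
        + (F 0 ω - F N ω) * z N ω) := by
    intro ω
    have hs : ∑ n ∈ Finset.range N, ΔM n ω
        = (F N ω - F 0 ω) + h * ∑ n ∈ Finset.range N, (f (y n ω) - c) := by
      have : ∀ n, ΔM n ω = (F (n + 1) ω - F n ω) + h * (f (y n ω) - c) := by
        intro n
        have := hPoisson (y n ω)
        simp only [ΔM, F, g]
        linarith
      simp_rw [this]
      rw [Finset.sum_add_distrib,
        show (∑ x ∈ Finset.range N, (F (x + 1) ω - F x ω)) = F N ω - F 0 ω from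
          Finset.sum_range_sub (fun k => F k ω) N,
        ← Finset.mul_sum]
    rw [hs]
    field_simp
    ring
  -- main computation
  have hintsum : ∀ n, Integrable (fun ω => ΔM n ω * z N ω) μ := fun n =>
    aux_mul_int (hΔL2 n) (hzL2 N)
  have hFsub : MemLp (fun ω => F 0 ω - F N ω) 2 μ := (hL2a 0).sub (hL2a N)
  have hintb : Integrable (fun ω => (F 0 ω - F N ω) * z N ω) μ :=
    aux_mul_int hFsub (hzL2 N)
  calc ∫ ω, ((1 / N : ℝ) * ∑ n ∈ Finset.range N, (f (y n ω) - c)) * z N ω ∂μ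
      = ∫ ω, 1 / (N * h) * ((∑ n ∈ Finset.range N, ΔM n ω) * z N ω
          + (F 0 ω - F N ω) * z N ω) ∂μ := by
        exact integral_congr_ae (Filter.Eventually.of_forall fun ω => hpt ω)
    _ = 1 / (N * h) * ∫ ω, ((∑ n ∈ Finset.range N, ΔM n ω) * z N ω
          + (F 0 ω - F N ω) * z N ω) ∂μ := integral_const_mul _ _
    _ = 1 / (N * h) * (∫ ω, (∑ n ∈ Finset.range N, ΔM n ω) * z N ω ∂μ
          + ∫ ω, (F 0 ω - F N ω) * z N ω ∂μ) := by
        rw [integral_add _ hintb]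
        · exact (integrable_finset_sum _ fun n _ => hintsum n).congr
            (Filter.Eventually.of_forall fun ω => (Finset.sum_mul _ _ _).symm)
    _ = 1 / (N * h) * ∑ n ∈ Finset.range N, ∫ ω, ΔM n ω * z N ω ∂μ
          + 1 / (N * h) * ∫ ω, (F 0 ω - F N ω) * z N ω ∂μ := by
        rw [mul_add]
        congr 2
        calc ∫ ω, (∑ n ∈ Finset.range N, ΔM n ω) * z N ω ∂μ
            = ∫ ω, ∑ n ∈ Finset.range N, ΔM n ω * z N ω ∂μ := by
              congr 1; ext ω; exact Finset.sum_mul _ _ _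
          _ = ∑ n ∈ Finset.range N, ∫ ω, ΔM n ω * z N ω ∂μ :=
              integral_finset_sum _ fun n _ => hintsum n
    _ = 1 / (N * h) * ∑ n ∈ Finset.range N,
          ∫ ω, ΔM n ω * (z (n + 1) ω - z n ω) ∂μ
          + 1 / (N * h) * ∫ ω, (F 0 ω - F N ω) * z N ω ∂μ := by
        congr 1
        congr 1
        exact Finset.sum_congr rfl fun n hn =>
          key n (Finset.mem_range.mp hn)
end
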